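/- Define φ_0 = p ∨ q and φ_k = φ_0 ∧ □_i φ_{k-1}. Then |φ_k| is linear in k (precisely 3 + 5k), while the smallest CDNF formula equivalent to φ_k has size at least single-exponential in k. Hence CDNF is not at least as succinct as SDNF. -/

import Mathlib

inductive Fm (A P : Type) : Type
  | tru : Fm A P
  | bot : Fm A P
  | var : P → Fm A P
  | neg : Fm A P → Fm A P
  | and : Fm A P → Fm A P → Fm A P
  | or : Fm A P → Fm A P → Fm A P
  | box : A → Fm A P → Fm A P
  | dia : A → Fm A P → Fm A P

structure KM (A P : Type) where
  S : Type
  R : A → S → S → Prop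
  V : S → P → Prop

variable {A P : Type}

def Sat (M : KM A P) : M.S → Fm A P → Prop
  | _, .tru => True
  | _, .bot => False
  | s, .var p => M.V s p
  | s, .neg φ => ¬ Sat M s φ
  | s, .and φ ψ => Sat M s φ ∧ Sat M s ψ
  | s, .or φ ψ => Sat M s φ ∨ Sat M s ψ
  | s, .box i φ => ∀ t, M.R i s t → Sat M t φ
  | s, .dia i φ => ∃ t, M.R i s t ∧ Sat M t φ

def Satisfiable (φ : Fm A P) : Prop := ∃ (M : KM A P) (s : M.S), Sat M s φ

def Entails (φ ψ : Fm A P) : Prop := ∀ (M : KM A P) (s : M.S), Sat M s φ → Sat M s ψ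

def FEquiv (φ ψ : Fm A P) : Prop := Entails φ ψ ∧ Entails ψ φ

/-- Size: number of occurrences of variables, connectives and modalities. -/
def fsize : Fm A P → ℕ
  | .tru => 1
  | .bot => 1
  | .var _ => 1
  | .neg φ => fsize φ + 1
  | .and φ ψ => fsize φ + fsize ψ + 1
  | .or φ ψ => fsize φ + fsize ψ + 1
  | .box _ φ => fsize φ + 1
  | .dia _ φ => fsize φ + 1

def IsProp : Fm A P → Prop
  | .tru => True
  | .bot => True
  | .var _ => True
  | .neg φ => IsProp φ
  | .and φ ψ => IsProp φ ∧ IsProp ψ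
  | .or φ ψ => IsProp φ ∧ IsProp ψ
  | .box _ _ => False
  | .dia _ _ => False

def conj : List (Fm A P) → Fm A P
  | [] => Fm.tru
  | φ :: L => φ.and (conj L)

def disj : List (Fm A P) → Fm A P
  | [] => Fm.bot
  | φ :: L => φ.or (disj L)

mutual
  inductive IsSTE : Fm A P → Prop
    | prop {α : Fm A P} : IsProp α → IsSTE α
    | mk (α : Fm A P) (B : List (A × Fm A P × List (Fm A P))) :
        IsProp α →
        (∀ x ∈ B, IsSDNF x.2.1) →
        (∀ x ∈ B, ∀ γ ∈ x.2.2, IsSDNF γ) →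
        (∀ x ∈ B, ∀ γ ∈ x.2.2, Entails γ x.2.1) →
        IsSTE (α.and (conj (B.map fun x =>
          (Fm.box x.1 x.2.1).and (conj (x.2.2.map (Fm.dia x.1))))))
  inductive IsSDNF : Fm A P → Prop
    | single {φ : Fm A P} : IsSTE φ → IsSDNF φ
    | or {φ ψ : Fm A P} : IsSDNF φ → IsSDNF ψ → IsSDNF (φ.or ψ)
end

inductive IsLit : Fm A P → Prop
  | pos (p : P) : IsLit (Fm.var p)
  | neg (p : P) : IsLit (Fm.neg (Fm.var p))

inductive IsTE : Fm A P → Prop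
  | lit {φ : Fm A P} : IsLit φ → IsTE φ
  | and {φ ψ : Fm A P} : IsTE φ → IsTE ψ → IsTE (φ.and ψ)

def cover (i : A) (Φ : List (Fm A P)) : Fm A P :=
  (Fm.box i (disj Φ)).and (conj (Φ.map (Fm.dia i)))

inductive IsCDNF : Fm A P → Prop
  | base (τ : Fm A P) (B : List (A × List (Fm A P))) :
      IsTE τ → Satisfiable τ →
      (∀ x ∈ B, ∀ φ ∈ x.2, IsCDNF φ) →
      IsCDNF (τ.and (conj (B.map fun x => cover x.1 x.2)))
  | or {φ ψ : Fm A P} : IsCDNF φ → IsCDNF ψ → IsCDNF (φ.or ψ)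

/-- `φ_0 = p ∨ q`, `φ_k = φ_0 ∧ □_i φ_{k-1}`. -/
def phik (p q : P) (i : A) : ℕ → Fm A P
  | 0 => (Fm.var p).or (Fm.var q)
  | k + 1 => ((Fm.var p).or (Fm.var q)).and (Fm.box i (phik p q i k))


section Auxx
variable {A P : Type}

lemma fsize_pos (φ : Fm A P) : 1 ≤ fsize φ := by
  induction φ <;> simp [fsize] <;> omega

lemma sat_conj {M : KM A P} {s : M.S} {L : List (Fm A P)} :
    Sat M s (conj L) ↔ ∀ φ ∈ L, Sat M s φ := by
  induction L with
  | nil => simp [conj, Sat]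
  | cons a L ih => simp [conj, Sat, ih]

lemma sat_disj {M : KM A P} {s : M.S} {L : List (Fm A P)} :
    Sat M s (disj L) ↔ ∃ φ ∈ L, Sat M s φ := by
  induction L with
  | nil => simp [disj, Sat]
  | cons a L ih => simp [disj, Sat, ih]

lemma sum_fsize_le_conj (L : List (Fm A P)) : (L.map fsize).sum ≤ fsize (conj L) := by
  induction L with
  | nil => simp
  | cons a L ih => simp only [List.map_cons, List.sum_cons, conj, fsize]; omega

lemma fsize_le_disj {L : List (Fm A P)} {φ : Fm A P} (h : φ ∈ L) :
    fsize φ ≤ fsize (disj L) := by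
  induction L with
  | nil => cases h
  | cons a L ih =>
    rcases List.mem_cons.mp h with rfl | h
    · simp [disj, fsize]; omega
    · have := ih h; simp [disj, fsize]; omega

lemma fsize_mem_le_conj {L : List (Fm A P)} {φ : Fm A P} (h : φ ∈ L) :
    fsize φ ≤ fsize (conj L) := by
  induction L with
  | nil => cases h
  | cons a L ih =>
    rcases List.mem_cons.mp h with rfl | h
    · simp [conj, fsize]; omega
    · have := ih h; simp [conj, fsize]; omega

lemma sat_of_isTE {τ : Fm A P} (h : IsTE τ) {M M' : KM A P} {s : M.S} {s' : M'.S}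
    (hv : ∀ r, M.V s r ↔ M'.V s' r) : Sat M s τ → Sat M' s' τ := by
  induction h with
  | lit hl =>
    cases hl with
    | pos r => intro hh; exact (hv r).1 hh
    | neg r => intro hh hc; exact hh ((hv r).2 hc)
  | and h1 h2 ih1 ih2 => rintro ⟨a, b⟩; exact ⟨ih1 a, ih2 b⟩

/-- Transfer of satisfaction along an embedding on a successor-closed set. -/
lemma sat_transfer {M N : KM A P} (f : M.S → N.S) (T : Set M.S)
    (hcl : ∀ a u v, u ∈ T → M.R a u v → v ∈ T)
    (hV : ∀ u ∈ T, ∀ r, M.V u r ↔ N.V (f u) r)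
    (hfwd : ∀ a u v, u ∈ T → M.R a u v → N.R a (f u) (f v))
    (hbwd : ∀ a u, u ∈ T → ∀ w, N.R a (f u) w → ∃ v, M.R a u v ∧ f v = w) :
    ∀ (φ : Fm A P) (u : M.S), u ∈ T → (Sat M u φ ↔ Sat N (f u) φ) := by
  intro φ
  induction φ with
  | tru => intro u hu; simp [Sat]
  | bot => intro u hu; simp [Sat]
  | var r => intro u hu; exact hV u hu r
  | neg φ ih => intro u hu; simp only [Sat]; rw [ih u hu]
  | and φ ψ ih1 ih2 => intro u hu; simp only [Sat]; rw [ih1 u hu, ih2 u hu]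
  | or φ ψ ih1 ih2 => intro u hu; simp only [Sat]; rw [ih1 u hu, ih2 u hu]
  | box a φ ih =>
    intro u hu
    simp only [Sat]
    constructor
    · intro h w hw
      obtain ⟨v, hv, rfl⟩ := hbwd a u hu w hw
      exact (ih v (hcl a u v hu hv)).1 (h v hv)
    · intro h v hv
      exact (ih v (hcl a u v hu hv)).2 (h (f v) (hfwd a u v hu hv))
  | dia a φ ih =>
    intro u hu
    simp only [Sat]
    constructor
    · rintro ⟨v, hv, hs⟩
      exact ⟨f v, hfwd a u v hu hv, (ih v (hcl a u v hu hv)).1 hs⟩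
    · rintro ⟨w, hw, hs⟩
      obtain ⟨v, hv, rfl⟩ := hbwd a u hu w hw
      exact ⟨v, hv, (ih v (hcl a u v hu hv)).2 hs⟩

end Auxx


section Chain
variable {A P : Type}

/-- The infinite chain where every state satisfies exactly `p`. -/
def Ch (A P : Type) (p : P) : KM A P :=
  ⟨ℕ, fun _ m m' => m' = m + 1, fun _ r => r = p⟩

lemma ch_sat_phik (p q : P) (i : A) : ∀ (k n : ℕ), Sat (Ch A P p) n (phik p q i k) := by
  intro k
  induction k with
  | zero => intro n; exact Or.inl rfl
  | succ k ih =>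
    intro n
    refine ⟨Or.inl rfl, ?_⟩
    rintro t rfl
    exact ih (n + 1)

/-- Glue a new model `N` pointed at `t` as an extra `i`-successor of chain state `n`. -/
def Glue (p : P) (i : A) (N : KM A P) (t : N.S) (n : ℕ) : KM A P where
  S := ℕ ⊕ N.S
  R a x y :=
    match x, y with
    | .inl m, .inl m' => m' = m + 1
    | .inl m, .inr u => a = i ∧ m = n ∧ u = t
    | .inr u, .inr v => N.R a u v
    | .inr _, .inl _ => False
  V x r :=
    match x with
    | .inl _ => r = p
    | .inr u => N.V u r

lemma glue_inr (p : P) (i : A) (N : KM A P) (t : N.S) (n : ℕ) (φ : Fm A P) (u : N.S) :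
    Sat N u φ ↔ Sat (Glue p i N t n) (Sum.inr u) φ := by
  refine sat_transfer (M := N) (N := Glue p i N t n) Sum.inr Set.univ
    (fun _ _ _ _ _ => trivial) (fun u _ r => Iff.rfl) (fun a u v _ h => h)
    ?_ φ u trivial
  rintro a u - w hw
  match w, hw with
  | .inr v, hw => exact ⟨v, hw, rfl⟩

lemma glue_inl (p : P) (i : A) (N : KM A P) (t : N.S) (n : ℕ) (φ : Fm A P) (m : ℕ)
    (hm : n < m) : Sat (Ch A P p) m φ ↔ Sat (Glue p i N t n) (Sum.inl m) φ := by
  refine sat_transfer (M := Ch A P p) (N := Glue p i N t n) Sum.inl {m | n < m}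
    ?_ (fun u _ r => Iff.rfl) ?_ ?_ φ m hm
  · rintro a u v hu rfl; exact Nat.lt_succ_of_lt hu
  · rintro a u v hu rfl; exact rfl
  · rintro a u hu w hw
    match w, hw with
    | .inl m', hw => exact ⟨m', hw, rfl⟩
    | .inr v, hw => exact absurd hw.2.1.symm (Nat.ne_of_lt hu)

end Chain


section Pick
variable {A P : Type}

/-- From a satisfied CDNF formula, extract a satisfied base disjunct. -/
lemma cdnf_sat_elim {χ : Fm A P} (h : IsCDNF χ) {M : KM A P} {s : M.S} (hs : Sat M s χ) :
    ∃ (τ : Fm A P) (B : List (A × List (Fm A P))),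
      IsTE τ ∧ (∀ x ∈ B, ∀ φ ∈ x.2, IsCDNF φ) ∧
      Sat M s (τ.and (conj (B.map fun x => cover x.1 x.2))) ∧
      fsize (τ.and (conj (B.map fun x => cover x.1 x.2))) ≤ fsize χ ∧
      ∀ (M' : KM A P) (s' : M'.S),
        Sat M' s' (τ.and (conj (B.map fun x => cover x.1 x.2))) → Sat M' s' χ := by
  induction h with
  | base τ B hτ hsat hB =>
    exact ⟨τ, B, hτ, hB, hs, le_rfl, fun _ _ h => h⟩
  | or h1 h2 ih1 ih2 =>
    rcases hs with hs | hs
    · obtain ⟨τ, B, a1, a2, a3, a4, a5⟩ := ih1 hs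
      exact ⟨τ, B, a1, a2, a3, a4.trans (by simp only [fsize]; omega),
        fun M' s' h => Or.inl (a5 M' s' h)⟩
    · obtain ⟨τ, B, a1, a2, a3, a4, a5⟩ := ih2 hs
      exact ⟨τ, B, a1, a2, a3, a4.trans (by simp only [fsize]; omega),
        fun M' s' h => Or.inr (a5 M' s' h)⟩

/-- Pick, from every `i`-cover in a list of covers satisfied at chain state `n`,
a disjunct satisfied at chain state `n+1`; gluing any model of the picks below `n`
re-satisfies all the covers. -/
lemma pickB (p : P) (i : A) (n : ℕ) :
    ∀ B : List (A × List (Fm A P)),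
      (∀ x ∈ B, ∀ φ ∈ x.2, IsCDNF φ) →
      (∀ x ∈ B, Sat (Ch A P p) n (cover x.1 x.2)) →
      ∃ L2 : List (Fm A P),
        (∀ φ ∈ L2, IsCDNF φ) ∧ (∀ φ ∈ L2, Sat (Ch A P p) (n + 1) φ) ∧
        2 * (L2.map fsize).sum ≤ (B.map fun x => fsize (cover x.1 x.2)).sum ∧
        ∀ (N : KM A P) (t : N.S), (∀ φ ∈ L2, Sat N t φ) →
          ∀ x ∈ B, Sat (Glue p i N t n) (Sum.inl n) (cover x.1 x.2) := by
  intro B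
  induction B with
  | nil => exact fun _ _ => ⟨[], by simp, by simp, by simp, by simp⟩
  | cons x B ih =>
    intro hcd hsat
    obtain ⟨L2, c1, c2, c3, c4⟩ := ih (fun y hy => hcd y (List.mem_cons_of_mem x hy))
      (fun y hy => hsat y (List.mem_cons_of_mem x hy))
    obtain ⟨a, Φ⟩ := x
    have hx : Sat (Ch A P p) n (cover a Φ) := hsat _ (List.mem_cons_self)
    have hbox : Sat (Ch A P p) (n + 1) (disj Φ) := hx.1 (n + 1) rfl
    have hall : ∀ φ ∈ Φ, Sat (Ch A P p) (n + 1) φ := by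
      intro φ hφ
      have := (sat_conj.mp hx.2) _ (List.mem_map_of_mem (f := Fm.dia a) hφ)
      obtain ⟨u, hu, hsu⟩ := this
      have : u = n + 1 := hu
      exact this ▸ hsu
    -- transfer of chain satisfaction at n+1 into the glue
    by_cases hai : a = i
    · subst hai
      obtain ⟨φ0, hφ0, hsφ0⟩ := sat_disj.mp hbox
      refine ⟨φ0 :: L2, ?_, ?_, ?_, ?_⟩
      · rintro φ hφ
        rcases List.mem_cons.mp hφ with rfl | hφ
        · exact hcd (a, Φ) (List.mem_cons_self) φ hφ0
        · exact c1 φ hφ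
      · rintro φ hφ
        rcases List.mem_cons.mp hφ with rfl | hφ
        · exact hsφ0
        · exact c2 φ hφ
      · have h1 : fsize φ0 ≤ fsize (disj Φ) := fsize_le_disj hφ0
        have h2 : fsize φ0 + 1 ≤ fsize (conj (Φ.map (Fm.dia a))) := by
          have := fsize_mem_le_conj (List.mem_map_of_mem (f := Fm.dia a) hφ0)
          simpa [fsize] using this
        simp only [List.map_cons, List.sum_cons]
        have : fsize (cover a Φ) = fsize (disj Φ) + 1 + fsize (conj (Φ.map (Fm.dia a))) + 1 := by
          simp [cover, fsize]
        omega
      · intro N t ht y hy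
        have htL2 : ∀ φ ∈ L2, Sat N t φ := fun φ hφ => ht φ (List.mem_cons_of_mem _ hφ)
        rcases List.mem_cons.mp hy with rfl | hy
        · -- satisfy cover a Φ at (inl n) in the glue
          refine ⟨?_, ?_⟩
          · rintro w hw
            match w, hw with
            | .inl m, hw =>
              have : (m : ℕ) = n + 1 := hw
              subst this
              exact (glue_inl p a N t n (disj Φ) (n+1) (Nat.lt_succ_self n)).mp hbox
            | .inr u, hw =>
              have h1 : Sat N t φ0 := ht φ0 (List.mem_cons_self)
              have h2 : Sat (Glue p a N t n) (Sum.inr t) φ0 := (glue_inr p a N t n φ0 t).mp h1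
              rw [hw.2.2]
              exact sat_disj.mpr ⟨φ0, hφ0, h2⟩
          · refine sat_conj.mpr ?_
            rintro ψ hψ
            obtain ⟨φ, hφ, rfl⟩ := List.mem_map.mp hψ
            exact ⟨Sum.inl (n+1), rfl,
              (glue_inl p a N t n φ (n+1) (Nat.lt_succ_self n)).mp (hall φ hφ)⟩
        · exact c4 N t htL2 y hy
    · refine ⟨L2, c1, c2, by simp only [List.map_cons, List.sum_cons]; omega, ?_⟩
      intro N t ht y hy
      rcases List.mem_cons.mp hy with rfl | hy
      · refine ⟨?_, ?_⟩
        · rintro w hw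
          match w, hw with
          | .inl m, hw =>
            have : (m : ℕ) = n + 1 := hw
            subst this
            exact (glue_inl p i N t n (disj Φ) (n+1) (Nat.lt_succ_self n)).mp hbox
          | .inr u, hw => exact absurd hw.1 hai
        · refine sat_conj.mpr ?_
          rintro ψ hψ
          obtain ⟨φ, hφ, rfl⟩ := List.mem_map.mp hψ
          exact ⟨Sum.inl (n+1), rfl,
            (glue_inl p i N t n φ (n+1) (Nat.lt_succ_self n)).mp (hall φ hφ)⟩
      · exact c4 N t ht y hy

end Pick


section Main
variable {A P : Type}

lemma pick1 (p : P) (i : A) (n : ℕ) {χ : Fm A P} (hχ : IsCDNF χ)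
    (hs : Sat (Ch A P p) n χ) :
    ∃ L2 : List (Fm A P),
      (∀ φ ∈ L2, IsCDNF φ) ∧ (∀ φ ∈ L2, Sat (Ch A P p) (n + 1) φ) ∧
      2 * (L2.map fsize).sum ≤ fsize χ ∧
      ∀ (N : KM A P) (t : N.S), (∀ φ ∈ L2, Sat N t φ) →
        Sat (Glue p i N t n) (Sum.inl n) χ := by
  obtain ⟨τ, B, hτ, hB, hsat, hle, hent⟩ := cdnf_sat_elim hχ hs
  have hδ := hsat
  obtain ⟨hsτ, hscov⟩ := hδ
  have hcovs : ∀ x ∈ B, Sat (Ch A P p) n (cover x.1 x.2) := by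
    intro x hx
    exact sat_conj.mp hscov _ (List.mem_map_of_mem hx)
  obtain ⟨L2, c1, c2, c3, c4⟩ := pickB p i n B hB hcovs
  refine ⟨L2, c1, c2, ?_, ?_⟩
  · have h1 : (B.map fun x => fsize (cover x.1 x.2)).sum
        ≤ fsize (conj (B.map fun x => cover x.1 x.2)) := by
      have := sum_fsize_le_conj (B.map fun x => cover x.1 x.2)
      simpa [List.map_map, Function.comp_def] using this
    have h2 : fsize (τ.and (conj (B.map fun x => cover x.1 x.2)))
        = fsize τ + fsize (conj (B.map fun x => cover x.1 x.2)) + 1 := rfl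
    omega
  · intro N t ht
    -- χ is the disjunct (possibly wrapped in ors); we satisfy the disjunct and transfer
    -- via an entailment of the disjunct into χ
    have hdisj : Sat (Glue p i N t n) (Sum.inl n)
        (τ.and (conj (B.map fun x => cover x.1 x.2))) := by
      constructor
      · exact sat_of_isTE (M := Ch A P p) (M' := Glue p i N t n) (s := n)
          (s' := Sum.inl n) hτ (fun r => Iff.rfl) hsτ
      · refine sat_conj.mpr ?_
        intro ψ hψ
        obtain ⟨x, hx, rfl⟩ := List.mem_map.mp hψ
        exact c4 N t ht x hx
    exact hent _ _ hdisj

lemma pickL (p : P) (i : A) (n : ℕ) :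
    ∀ L : List (Fm A P), (∀ χ ∈ L, IsCDNF χ) → (∀ χ ∈ L, Sat (Ch A P p) n χ) →
    ∃ L2 : List (Fm A P),
      (∀ φ ∈ L2, IsCDNF φ) ∧ (∀ φ ∈ L2, Sat (Ch A P p) (n + 1) φ) ∧
      2 * (L2.map fsize).sum ≤ (L.map fsize).sum ∧
      ∀ (N : KM A P) (t : N.S), (∀ φ ∈ L2, Sat N t φ) →
        ∀ χ ∈ L, Sat (Glue p i N t n) (Sum.inl n) χ := by
  intro L
  induction L with
  | nil => exact fun _ _ => ⟨[], by simp, by simp, by simp, by simp⟩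
  | cons χ L ih =>
    intro hcd hsat
    obtain ⟨L2, c1, c2, c3, c4⟩ := ih (fun y hy => hcd y (List.mem_cons_of_mem χ hy))
      (fun y hy => hsat y (List.mem_cons_of_mem χ hy))
    obtain ⟨L1, d1, d2, d3, d4⟩ := pick1 p i n (hcd χ (List.mem_cons_self))
      (hsat χ (List.mem_cons_self))
    refine ⟨L1 ++ L2, ?_, ?_, ?_, ?_⟩
    · intro φ hφ
      rcases List.mem_append.mp hφ with h | h
      · exact d1 φ h
      · exact c1 φ h
    · intro φ hφ
      rcases List.mem_append.mp hφ with h | h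
      · exact d2 φ h
      · exact c2 φ h
    · simp only [List.map_append, List.sum_append, List.map_cons, List.sum_cons]
      omega
    · intro N t ht y hy
      rcases List.mem_cons.mp hy with rfl | hy
      · exact d4 N t (fun φ hφ => ht φ (List.mem_append.mpr (Or.inl hφ)))
      · exact c4 N t (fun φ hφ => ht φ (List.mem_append.mpr (Or.inr hφ))) y hy

/-- One-state model with everything false. -/
def Triv (A P : Type) : KM A P := ⟨Unit, fun _ _ _ => False, fun _ _ => False⟩

lemma mainlemma (p q : P) (i : A) :
    ∀ (k n : ℕ) (L : List (Fm A P)), (∀ χ ∈ L, IsCDNF χ) →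
      (∀ χ ∈ L, Sat (Ch A P p) n χ) →
      (∀ (N : KM A P) (t : N.S), (∀ χ ∈ L, Sat N t χ) → Sat N t (phik p q i k)) →
      2 ^ k ≤ (L.map fsize).sum := by
  intro k
  induction k with
  | zero =>
    intro n L hcd hsat hent
    match L with
    | [] =>
      exfalso
      have := hent (Triv A P) () (by simp)
      rcases this with h | h <;> exact h
    | χ :: L =>
      have := fsize_pos χ
      simp only [List.map_cons, List.sum_cons, pow_zero]
      omega
  | succ k ih =>
    intro n L hcd hsat hent
    obtain ⟨L2, c1, c2, c3, c4⟩ := pickL p i n L hcd hsat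
    have hent2 : ∀ (N : KM A P) (t : N.S), (∀ χ ∈ L2, Sat N t χ) →
        Sat N t (phik p q i k) := by
      intro N t ht
      have hg : Sat (Glue p i N t n) (Sum.inl n) (phik p q i (k + 1)) :=
        hent (Glue p i N t n) (Sum.inl n) (c4 N t ht)
      have hb : Sat (Glue p i N t n) (Sum.inr t) (phik p q i k) :=
        hg.2 (Sum.inr t) ⟨rfl, rfl, rfl⟩
      exact (glue_inr p i N t n (phik p q i k) t).mpr hb
    have := ih (n + 1) L2 c1 c2 hent2
    calc 2 ^ (k + 1) = 2 * 2 ^ k := by ring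
    _ ≤ 2 * (L2.map fsize).sum := by omega
    _ ≤ (L.map fsize).sum := c3


end Main


section Sdnf
variable {A P : Type}

/-- Linear-size SDNF formulas equivalent to `phik`. -/
def sdnfk (p q : P) (i : A) : ℕ → Fm A P
  | 0 => (Fm.var p).or (Fm.var q)
  | k + 1 => ((Fm.var p).or (Fm.var q)).and
      (((Fm.box i (sdnfk p q i k)).and Fm.tru).and Fm.tru)

lemma isSDNF_sdnfk (p q : P) (i : A) : ∀ k, IsSDNF (sdnfk p q i k) := by
  intro k
  induction k with
  | zero => exact IsSDNF.single (IsSTE.prop ⟨trivial, trivial⟩)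
  | succ k ih =>
    exact IsSDNF.single (IsSTE.mk ((Fm.var p).or (Fm.var q)) [(i, sdnfk p q i k, [])]
      ⟨trivial, trivial⟩ (by simpa using ih) (by simp) (by simp))

lemma fsize_sdnfk (p q : P) (i : A) : ∀ k, fsize (sdnfk p q i k) = 3 + 9 * k := by
  intro k
  induction k with
  | zero => rfl
  | succ k ih => simp only [sdnfk, fsize, ih]; omega

lemma sat_sdnfk (p q : P) (i : A) :
    ∀ k (M : KM A P) (s : M.S), Sat M s (sdnfk p q i k) ↔ Sat M s (phik p q i k) := by
  intro k
  induction k with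
  | zero => intro M s; rfl
  | succ k ih =>
    intro M s
    show Sat M s _ ∧ (Sat M s _ ∧ True) ∧ True ↔ Sat M s _ ∧ Sat M s _
    simp only [and_true]
    constructor
    · rintro ⟨h1, h2⟩
      exact ⟨h1, fun t ht => (ih M t).mp (h2 t ht)⟩
    · rintro ⟨h1, h2⟩
      exact ⟨h1, fun t ht => (ih M t).mpr (h2 t ht)⟩

lemma fsize_phik (p q : P) (i : A) : ∀ k, fsize (phik p q i k) = 3 + 5 * k := by
  intro k
  induction k with
  | zero => rfl
  | succ k ih => simp only [phik, fsize, ih]; omega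

end Sdnf

lemma poly_lt_two_pow (f : Polynomial ℕ) : ∃ k : ℕ, f.eval (3 + 9 * k) < 2 ^ k := by
  set d := f.natDegree with hd
  set Ac := ∑ j ∈ Finset.range (d + 1), f.coeff j with hAc
  have hstep : ∀ m : ℕ, 1 ≤ m → f.eval m ≤ Ac * m ^ d := by
    intro m hm
    rw [Polynomial.eval_eq_sum_range]
    calc ∑ j ∈ Finset.range (d + 1), f.coeff j * m ^ j
        ≤ ∑ j ∈ Finset.range (d + 1), f.coeff j * m ^ d := by
          refine Finset.sum_le_sum ?_
          intro j hj
          exact Nat.mul_le_mul_left _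
            (Nat.pow_le_pow_right hm (Nat.le_of_lt_succ (Finset.mem_range.mp hj)))
      _ = Ac * m ^ d := by rw [hAc, Finset.sum_mul]
  have hlim := tendsto_pow_const_div_const_pow_of_one_lt d (by norm_num : (1 : ℝ) < 2)
  have hmul := hlim.const_mul ((Ac * 12 ^ d : ℕ) : ℝ)
  rw [mul_zero] at hmul
  have hev : ∀ᶠ k : ℕ in Filter.atTop,
      ((Ac * 12 ^ d : ℕ) : ℝ) * ((k : ℝ) ^ d / 2 ^ k) < 1 :=
    hmul.eventually_lt_const (by norm_num)
  obtain ⟨k, hk1, hk2⟩ := (hev.and (Filter.eventually_ge_atTop 1)).exists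
  refine ⟨k, ?_⟩
  have h2pos : (0 : ℝ) < 2 ^ k := by positivity
  have hflt : ((Ac * 12 ^ d : ℕ) : ℝ) * (k : ℝ) ^ d < 2 ^ k := by
    rw [mul_div_assoc'] at hk1
    exact (div_lt_one h2pos).mp hk1
  have hnat : Ac * 12 ^ d * k ^ d < 2 ^ k := by
    have : ((Ac * 12 ^ d * k ^ d : ℕ) : ℝ) < ((2 ^ k : ℕ) : ℝ) := by
      push_cast
      push_cast at hflt
      linarith
    exact_mod_cast this
  calc f.eval (3 + 9 * k) ≤ Ac * (3 + 9 * k) ^ d := hstep _ (by omega)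
    _ ≤ Ac * (12 * k) ^ d := by
        refine Nat.mul_le_mul_left _ (Nat.pow_le_pow_left (by omega) d)
    _ = Ac * 12 ^ d * k ^ d := by rw [mul_pow, mul_assoc]
    _ < 2 ^ k := hnat


lemma cdnf_lb (p q : P) (i : A) (k : ℕ) (ψ : Fm A P) (hcd : IsCDNF ψ)
    (heq : FEquiv ψ (phik p q i k)) : 2 ^ k ≤ fsize ψ := by
  have h0 : Sat (Ch A P p) (0 : ℕ) (phik p q i k) := ch_sat_phik p q i k 0
  have h1 : Sat (Ch A P p) (0 : ℕ) ψ := heq.2 (Ch A P p) (show (Ch A P p).S from (0 : ℕ)) h0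
  have h2 := mainlemma p q i k 0 [ψ] (by simpa using hcd) (by simpa using h1)
    (fun N t ht => heq.1 N t (ht ψ (List.mem_cons_self)))
  simpa using h2

theorem cdnf_not_as_succinct_as_sdnf (p q : P) (hpq : p ≠ q) (i : A) :
    (∀ k : ℕ, fsize (phik p q i k) = 3 + 5 * k) ∧
    (∃ c : ℝ, 1 < c ∧ ∀ (k : ℕ) (ψ : Fm A P),
       IsCDNF ψ → FEquiv ψ (phik p q i k) → c ^ k ≤ (fsize ψ : ℝ)) ∧
    ¬ ∃ f : Polynomial ℕ, ∀ φ : Fm A P, IsSDNF φ →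
        ∃ ψ : Fm A P, IsCDNF ψ ∧ FEquiv ψ φ ∧ fsize ψ ≤ f.eval (fsize φ) := by
  refine ⟨fsize_phik p q i, ⟨2, by norm_num, ?_⟩, ?_⟩
  · intro k ψ hcd heq
    have h := cdnf_lb p q i k ψ hcd heq
    calc (2 : ℝ) ^ k = ((2 ^ k : ℕ) : ℝ) := by push_cast; ring
      _ ≤ (fsize ψ : ℝ) := Nat.cast_le.mpr h
  · rintro ⟨f, hf⟩
    obtain ⟨k, hk⟩ := poly_lt_two_pow f
    obtain ⟨ψ, hcd, heq, hle⟩ := hf (sdnfk p q i k) (isSDNF_sdnfk p q i k)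
    have heq' : FEquiv ψ (phik p q i k) :=
      ⟨fun M s h => (sat_sdnfk p q i k M s).mp (heq.1 M s h),
       fun M s h => heq.2 M s ((sat_sdnfk p q i k M s).mpr h)⟩
    have hlb := cdnf_lb p q i k ψ hcd heq'
    rw [fsize_sdnfk p q i k] at hle
    omega
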